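/- Let n be a positive integer, μ ∈ ℂ^n a generic vector, and Δ a local derivation on the Witt algebra W_n = Der(ℂ[t_1^{±1},…,t_n^{±1}]) such that Δ(d_μ) = 0. Then Δ vanishes on the Cartan subalgebra 𝔥 = span_ℂ{d_1,…,d_n}; in particular Δ(d_i) = 0 for every 1 ≤ i ≤ n. -/

import Mathlib

open scoped BigOperators

noncomputable section

/-- The Laurent polynomial algebra `ℂ[t₁^{±1},…,tₙ^{±1}]`, realized as the group
algebra of `ℤⁿ` over `ℂ`. -/
abbrev LaurentAlg (n : ℕ) : Type := AddMonoidAlgebra ℂ (Fin n → ℤ)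

/-- The Witt algebra `Wₙ = Der(ℂ[t₁^{±1},…,tₙ^{±1}])`. -/
abbrev WittAlg (n : ℕ) : Type := Derivation ℂ (LaurentAlg n) (LaurentAlg n)

/-- Pairing `(μ, β) ↦ ∑ μᵢ βᵢ`. -/
def dotp {n : ℕ} (μ : Fin n → ℂ) (β : Fin n → ℤ) : ℂ := ∑ i, μ i * (β i : ℂ)

lemma dotp_add {n : ℕ} (μ : Fin n → ℂ) (β γ : Fin n → ℤ) :
    dotp μ (β + γ) = dotp μ β + dotp μ γ := by
  simp [dotp, mul_add, Finset.sum_add_distrib]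

lemma dotp_zero {n : ℕ} (μ : Fin n → ℂ) : dotp μ 0 = 0 := by simp [dotp]

/-- A vector `μ ∈ ℂⁿ` is generic if `μ·α ≠ 0` for all nonzero `α ∈ ℤⁿ`. -/
def IsGeneric {n : ℕ} (μ : Fin n → ℂ) : Prop :=
  ∀ α : Fin n → ℤ, α ≠ 0 → dotp μ α ≠ 0

/-- Underlying linear map of `t^α d_μ`. -/
def wdAux {n : ℕ} (μ : Fin n → ℂ) (α : Fin n → ℤ) : LaurentAlg n →ₗ[ℂ] LaurentAlg n :=
  (AddMonoidAlgebra.coeffLinearEquiv ℂ).symm.toLinearMap ∘ₗ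
    (Finsupp.lsum ℂ fun β => dotp μ β • Finsupp.lsingle (α + β)) ∘ₗ
    (AddMonoidAlgebra.coeffLinearEquiv ℂ).toLinearMap

lemma wdAux_single {n : ℕ} (μ : Fin n → ℂ) (α β : Fin n → ℤ) (c : ℂ) :
    wdAux μ α (AddMonoidAlgebra.single β c) = dotp μ β • AddMonoidAlgebra.single (α + β) c := by
  classical
  rw [wdAux, AddMonoidAlgebra.single]
  show AddMonoidAlgebra.ofCoeff (Finsupp.lsum ℂ (fun β => dotp μ β • Finsupp.lsingle (α + β))
    (Finsupp.single β c)) = _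
  rw [Finsupp.lsum_single]
  rfl

/-- The derivation `t^α d_μ` of the Laurent polynomial algebra, sending
`t^β ↦ (μ·β) t^{α+β}`.  In particular `wd μ 0 = d_μ` and
`wd (Pi.single i 1) α = t^α dᵢ`. -/
def wd {n : ℕ} (μ : Fin n → ℂ) (α : Fin n → ℤ) : WittAlg n where
  toLinearMap := wdAux μ α
  map_one_eq_zero' := by
    rw [show (1 : LaurentAlg n) = AddMonoidAlgebra.single 0 1 from rfl, wdAux_single, dotp_zero,
      zero_smul]
  leibniz' := by
    intro a b
    show wdAux μ α (a * b) = a • wdAux μ α b + b • wdAux μ α a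
    induction a using AddMonoidAlgebra.induction_linear with
    | zero => simp
    | add f g hf hg =>
        rw [add_mul, map_add, hf, hg, map_add]
        simp only [smul_eq_mul, add_mul, mul_add]
        ring
    | single β c =>
      induction b using AddMonoidAlgebra.induction_linear with
      | zero => simp
      | add f g hf hg =>
          rw [mul_add, map_add, hf, hg, map_add]
          simp only [smul_eq_mul, add_mul, mul_add]
          ring
      | single γ d =>
          show wdAux μ α (AddMonoidAlgebra.single β c * AddMonoidAlgebra.single γ d) =
            AddMonoidAlgebra.single β c • wdAux μ α (AddMonoidAlgebra.single γ d)
            + AddMonoidAlgebra.single γ d • wdAux μ α (AddMonoidAlgebra.single β c)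
          rw [AddMonoidAlgebra.single_mul_single, wdAux_single, wdAux_single, wdAux_single,
            smul_eq_mul, smul_eq_mul, mul_smul_comm, mul_smul_comm,
            AddMonoidAlgebra.single_mul_single, AddMonoidAlgebra.single_mul_single,
            dotp_add, add_smul]
          rw [show β + (α + γ) = α + (β + γ) by abel, show γ + (α + β) = α + (β + γ) by abel,
            mul_comm d c, add_comm]

/-- A linear map `Δ` on a Lie algebra `L` is a local derivation if for each `x`
there is a Lie algebra derivation `Dₓ` with `Δ x = Dₓ x`. -/
def IsLocalDerivation {L : Type*} [LieRing L] [LieAlgebra ℂ L] (Δ : L →ₗ[ℂ] L) : Prop :=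
  ∀ x : L, ∃ D : LieDerivation ℂ L L, Δ x = D x

end
namespace LocalDerAux

lemma wd_apply_single {n : ℕ} (ν : Fin n → ℂ) (b γ : Fin n → ℤ) (c : ℂ) :
    wd ν b (AddMonoidAlgebra.single γ c) = dotp ν γ • AddMonoidAlgebra.single (b + γ) c :=
  wdAux_single ν b γ c

lemma witt_ext {n : ℕ} {X Y : WittAlg n}
    (h : ∀ β, X (AddMonoidAlgebra.single β (1:ℂ)) = Y (AddMonoidAlgebra.single β 1)) : X = Y := by
  apply Derivation.ext
  intro a
  induction a using AddMonoidAlgebra.induction_linear with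
  | zero => simp
  | add f g hf hg => rw [map_add, map_add, hf, hg]
  | single β c =>
    have h2 : (AddMonoidAlgebra.single β c : LaurentAlg n) = c • AddMonoidAlgebra.single β 1 := by
      simp [AddMonoidAlgebra.smul_single]
    rw [h2, Derivation.map_smul, Derivation.map_smul, h]

lemma wd_apply {n : ℕ} (ν : Fin n → ℂ) (b : Fin n → ℤ) (x : LaurentAlg n) (ε : Fin n → ℤ) :
    (wd ν b x).coeff ε = dotp ν (ε - b) * x.coeff (ε - b) := by
  induction x using AddMonoidAlgebra.induction_linear with
  | zero => simp
  | add f g hf hg => rw [map_add, AddMonoidAlgebra.coeff_add, AddMonoidAlgebra.coeff_add, Finsupp.add_apply, Finsupp.add_apply, hf, hg, mul_add]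
  | single γ c =>
    rw [wd_apply_single]
    by_cases hγ : γ = ε - b
    · subst hγ
      simp [AddMonoidAlgebra.coeff_single, Finsupp.single_apply]
    · have h1 : b + γ ≠ ε := by
        intro h; apply hγ; rw [← h]; abel
      simp [AddMonoidAlgebra.coeff_single, Finsupp.single_apply, h1, Ne.symm hγ, hγ]

end LocalDerAux
namespace LocalDerAux

lemma dotp_sub_smul {n : ℕ} (l m : Fin n → ℂ) (c : ℂ) (γ : Fin n → ℤ) :
    dotp (l - c • m) γ = dotp l γ - c * dotp m γ := by
  simp [dotp, sub_mul, Finset.sum_sub_distrib, Finset.mul_sum, mul_assoc]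

lemma dotp_single_one {n : ℕ} (i : Fin n) (γ : Fin n → ℤ) :
    dotp (Pi.single i 1) γ = (γ i : ℂ) := by
  simp [dotp, Pi.single_apply, ite_mul]

lemma lie_wd_zero {n : ℕ} (l ν : Fin n → ℂ) (b : Fin n → ℤ) :
    ⁅wd l 0, wd ν b⁆ = dotp l b • wd ν b := by
  apply witt_ext
  intro β
  simp only [Derivation.commutator_apply, wd_apply_single, Derivation.map_smul,
    Derivation.coe_smul, Pi.smul_apply, zero_add, dotp_add, smul_smul, ← sub_smul]
  congr 1
  ring

end LocalDerAux
namespace LocalDerAux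

lemma lau_add_apply {n : ℕ} (f g : LaurentAlg n) (p : Fin n → ℤ) :
    (f + g).coeff p = f.coeff p + g.coeff p := rfl

lemma lau_sub_apply {n : ℕ} (f g : LaurentAlg n) (p : Fin n → ℤ) :
    (f - g).coeff p = f.coeff p - g.coeff p := rfl

lemma lau_smul_apply {n : ℕ} (c : ℂ) (f : LaurentAlg n) (p : Fin n → ℤ) :
    (c • f).coeff p = c * f.coeff p := rfl

lemma master {n : ℕ} (D : LieDerivation ℂ (WittAlg n) (WittAlg n)) (l : Fin n → ℂ)
    (α : Fin n → ℤ) (hlα : dotp l α = 0) (ν : Fin n → ℂ) (β γ : Fin n → ℤ) :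
    dotp ν γ * ((D (wd l 0)) (AddMonoidAlgebra.single (β + γ) (1:ℂ))).coeff (α + (β + γ))
      = dotp ν (α + γ) * ((D (wd l 0)) (AddMonoidAlgebra.single γ (1:ℂ))).coeff (α + γ) := by
  have hE : dotp l β • D (wd ν β) = ⁅D (wd l 0), wd ν β⁆ + ⁅wd l 0, D (wd ν β)⁆ := by
    have h1 := LieDerivation.apply_lie_eq_add D (wd l 0) (wd ν β)
    rw [lie_wd_zero, map_smul] at h1
    rw [h1, add_comm]
  have h2 := congrArg (fun (Z : WittAlg n) => (Z (AddMonoidAlgebra.single γ (1:ℂ))).coeff (α + β + γ)) hE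
  simp only [Derivation.smul_apply, Derivation.add_apply, Derivation.commutator_apply,
    lau_add_apply, lau_sub_apply, lau_smul_apply] at h2
  have hsub : α + β + γ - β = α + γ := by abel
  have hassoc : α + β + γ = α + (β + γ) := by abel
  rw [wd_apply ν β, hsub] at h2
  rw [wd_apply l 0, sub_zero] at h2
  rw [show (wd ν β) (AddMonoidAlgebra.single γ (1:ℂ)) = dotp ν γ • AddMonoidAlgebra.single (β + γ) 1 from
    wd_apply_single ν β γ 1] at h2
  rw [show (wd l 0) (AddMonoidAlgebra.single γ (1:ℂ)) = dotp l γ • AddMonoidAlgebra.single γ 1 from by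
    rw [wd_apply_single, zero_add]] at h2
  rw [Derivation.map_smul, Derivation.map_smul, lau_smul_apply, lau_smul_apply] at h2
  rw [show dotp l (α + β + γ) = dotp l β + dotp l γ from by
    rw [dotp_add, dotp_add, hlα, zero_add]] at h2
  rw [hassoc] at h2
  linear_combination -h2

end LocalDerAux
namespace LocalDerAux

lemma wd_zero' {n : ℕ} : wd (0 : Fin n → ℂ) 0 = 0 := by
  apply witt_ext
  intro β
  rw [wd_apply_single]
  simp [dotp]

lemma key {n : ℕ} (hn : 0 < n) (D : LieDerivation ℂ (WittAlg n) (WittAlg n))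
    (l : Fin n → ℂ) (α : Fin n → ℤ) (hlα : dotp l α = 0) (δ : Fin n → ℤ) :
    ((D (wd l 0)) (AddMonoidAlgebra.single δ (1:ℂ))).coeff (α + δ) = 0 := by
  set g : (Fin n → ℤ) → ℂ := fun δ => ((D (wd l 0)) (AddMonoidAlgebra.single δ (1:ℂ))).coeff (α + δ) with hg
  show g δ = 0
  have hE : ∀ (ν : Fin n → ℂ) (β γ : Fin n → ℤ),
      dotp ν γ * g (β + γ) = dotp ν (α + γ) * g γ := fun ν β γ => master D l α hlα ν β γ
  have hg0 : g 0 = 0 := by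
    have h1 : AddMonoidAlgebra.single (0 : Fin n → ℤ) (1:ℂ) = (1 : LaurentAlg n) := rfl
    show ((D (wd l 0)) (AddMonoidAlgebra.single (0 : Fin n → ℤ) (1:ℂ))).coeff (α + 0) = 0
    rw [h1, Derivation.map_one_eq_zero]
    rfl
  by_cases hα : α = 0
  · subst hα
    set i0 : Fin n := ⟨0, hn⟩
    set γ0 : Fin n → ℤ := Pi.single i0 1 with hγ0
    have hd : dotp (Pi.single i0 1 : Fin n → ℂ) γ0 = 1 := by
      rw [dotp_single_one, hγ0, Pi.single_eq_same, Int.cast_one]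
    have hgγ0 : g γ0 = 0 := by
      have h1 := hE (Pi.single i0 1) (-γ0) γ0
      rw [neg_add_cancel, hg0, mul_zero, zero_add, hd, one_mul] at h1
      exact h1.symm
    have h2 := hE (Pi.single i0 1) (δ - γ0) γ0
    rw [sub_add_cancel, zero_add, hd, one_mul, one_mul, hgγ0] at h2
    exact h2
  · obtain ⟨i, hi⟩ : ∃ i, α i ≠ 0 := by
      by_contra hc
      push_neg at hc
      exact hα (funext hc)
    by_cases hl0 : l = 0
    · subst hl0
      rw [hg]
      simp only [wd_zero', map_zero]
      rfl
    · have hij : ∃ j, j ≠ i := by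
        by_contra hc
        push_neg at hc
        have hsum : dotp l α = l i * (α i : ℂ) := by
          rw [dotp]
          exact Finset.sum_eq_single i (fun b _ hb => absurd (hc b) hb)
            (fun h => absurd (Finset.mem_univ i) h)
        have hli : l i = 0 := by
          have := hlα
          rw [hsum] at this
          rcases mul_eq_zero.mp this with h | h
          · exact h
          · exact absurd (Int.cast_injective (α := ℂ) (by simpa using h)) hi
        apply hl0
        funext k
        rw [hc k, hli]
        rfl
      obtain ⟨j, hj⟩ := hij
      set γ0 : Fin n → ℤ := Pi.single j 1 with hγ0
      have hγ0i : (γ0 i : ℂ) = 0 := by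
        rw [hγ0, Pi.single_eq_of_ne hj.symm]
        norm_num
      have hγ0j : (γ0 j : ℂ) = 1 := by
        rw [hγ0, Pi.single_eq_same, Int.cast_one]
      have hgγ0 : g γ0 = 0 := by
        have h1 := hE (Pi.single i 1) 0 γ0
        rw [zero_add, dotp_single_one, dotp_single_one, hγ0i, zero_mul] at h1
        have hαγ : ((α + γ0) i : ℂ) ≠ 0 := by
          have : (α + γ0) i = α i := by simp [hγ0, Pi.single_eq_of_ne hj.symm]
          rw [this]
          exact_mod_cast hi
        exact (mul_eq_zero.mp h1.symm).resolve_left hαγ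
      have h2 := hE (Pi.single j 1) (δ - γ0) γ0
      rw [sub_add_cancel, dotp_single_one, dotp_single_one, hγ0j, one_mul, hgγ0, mul_zero] at h2
      exact h2

end LocalDerAux
namespace LocalDerAux

lemma wd_decomp {n : ℕ} (l m : Fin n → ℂ) (c : ℂ) :
    wd l 0 = wd (l - c • m) 0 + c • wd m 0 := by
  apply witt_ext
  intro β
  rw [Derivation.add_apply, Derivation.smul_apply, wd_apply_single, wd_apply_single,
    wd_apply_single, dotp_sub_smul, smul_smul, sub_smul, sub_add_cancel]

lemma deltaZ {n : ℕ} (hn : 0 < n) (μ : Fin n → ℂ) (hμ : IsGeneric μ)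
    (Δ : WittAlg n →ₗ[ℂ] WittAlg n) (hΔ : IsLocalDerivation Δ)
    (h0 : Δ (wd μ 0) = 0) (l : Fin n → ℂ) : Δ (wd l 0) = 0 := by
  have hcoeff : ∀ (α β : Fin n → ℤ), ((Δ (wd l 0)) (AddMonoidAlgebra.single β (1:ℂ))).coeff (α + β) = 0 := by
    intro α β
    by_cases hc : dotp l α = 0
    · obtain ⟨D, hD⟩ := hΔ (wd l 0)
      rw [hD]
      exact key hn D l α hc β
    · have hα : α ≠ 0 := fun h => hc (by rw [h, dotp_zero])
      have hμα := hμ α hα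
      set c := dotp l α / dotp μ α with hc'
      rw [wd_decomp l μ c]
      have e1 : Δ (wd (l - c • μ) 0 + c • wd μ 0) = Δ (wd (l - c • μ) 0) := by
        rw [map_add, map_smul, h0, smul_zero, add_zero]
      rw [e1]
      obtain ⟨D, hD⟩ := hΔ (wd (l - c • μ) 0)
      rw [hD]
      refine key hn D _ α ?_ β
      rw [dotp_sub_smul, hc', div_mul_cancel₀ _ hμα, sub_self]
  apply witt_ext
  intro β
  apply AddMonoidAlgebra.coeff_injective
  apply Finsupp.ext
  intro p
  have h1 := hcoeff (p - β) β
  rw [sub_add_cancel] at h1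
  rw [h1]
  rfl

end LocalDerAux


/-- If `Δ` is a local derivation on `Wₙ` with `Δ(d_μ) = 0` (`μ` generic),
then `Δ` vanishes on the Cartan subalgebra `𝔥 = span{d₁,…,dₙ}`; in particular
`Δ(dᵢ) = 0` for all `i`. -/
theorem local_derivation_vanishes_on_Cartan (n : ℕ) (hn : 0 < n)
    (μ : Fin n → ℂ) (hμ : IsGeneric μ)
    (Δ : WittAlg n →ₗ[ℂ] WittAlg n) (hΔ : IsLocalDerivation Δ)
    (h0 : Δ (wd μ 0) = 0) :
    (∀ x ∈ Submodule.span ℂ (Set.range fun i : Fin n => wd (Pi.single i 1) 0), Δ x = 0)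
      ∧ ∀ i : Fin n, Δ (wd (Pi.single i 1) 0) = 0 := by
  have Z : ∀ l : Fin n → ℂ, Δ (wd l 0) = 0 := LocalDerAux.deltaZ hn μ hμ Δ hΔ h0
  constructor
  · intro x hx
    induction hx using Submodule.span_induction with
    | mem x hx => obtain ⟨i, rfl⟩ := hx; exact Z _
    | zero => exact map_zero Δ
    | add x y _ _ hx hy => rw [map_add, hx, hy, add_zero]
    | smul a x _ hx => rw [map_smul, hx, smul_zero]
  · intro i
    exact Z _
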